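/- Let D = (D_𝐒)_𝐒 be an operator-collection such that for every word 𝐒 with D_𝐒 ≠ 0, both S_e∪S₋ ≠ ∅ and S_e∪S₊ ≠ ∅. Then as quadratic forms, Σ_𝐒 D_𝐒 is relatively bounded by H₀ with constant ||D||₀: for every state ψ, |⟨ψ, (Σ_𝐒 D_𝐒)ψ⟩| ≤ ||D||₀·⟨ψ, H₀ψ⟩, where ||D||₀ is the word norm at μ = 0. -/

import Mathlib

open scoped BigOperators
set_option linter.unusedSectionVars false
open Matrix

noncomputable section

namespace QLDPC

open scoped Classical

/-- The four Pauli matrices 1, X, Y, Z. -/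
def pauliMat : Fin 4 → Matrix (Fin 2) (Fin 2) ℂ
  | 0 => 1
  | 1 => !![0, 1; 1, 0]
  | 2 => !![0, -Complex.I; Complex.I, 0]
  | 3 => !![1, 0; 0, -1]

variable {Λ E : Type}

/-- Operators on the Hilbert space (ℂ²)^{⊗Λ}. -/
abbrev Op (Λ : Type) [Fintype Λ] [DecidableEq Λ] := Matrix (Λ → Fin 2) (Λ → Fin 2) ℂ

/-- The operator of a Pauli string `p : Λ → Fin 4`. -/
def pauliOp [Fintype Λ] [DecidableEq Λ] (p : Λ → Fin 4) : Op Λ :=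
  fun f g => ∏ x, pauliMat (p x) (f x) (g x)

/-- Qubit support of a Pauli string. -/
def psupp [Fintype Λ] (p : Λ → Fin 4) : Finset Λ :=
  Finset.univ.filter fun x => p x ≠ 0

/-- The operator norm (largest singular value). -/
def opNorm [Fintype Λ] [DecidableEq Λ] (A : Op Λ) : ℝ :=
  ‖Matrix.toEuclideanCLM (𝕜 := ℂ) A‖

/-- Coefficient of the Pauli string `p` in the Pauli-basis expansion of `A`. -/
def pauliCoeff [Fintype Λ] [DecidableEq Λ] (A : Op Λ) (p : Λ → Fin 4) : ℂ :=
  Matrix.trace (pauliOp p * A) / ((2 : ℂ) ^ Fintype.card Λ)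

/-- Qubit support of a general operator, via its Pauli expansion. -/
def opSupp [Fintype Λ] [DecidableEq Λ] (A : Op Λ) : Set Λ :=
  {x | ∃ p : Λ → Fin 4, pauliCoeff A p ≠ 0 ∧ p x ≠ 0}

/-- The data of a family of stabilizer checks: each check is a signed Pauli string. -/
structure Checks (Λ E : Type) where
  str : E → Λ → Fin 4
  sgn : E → Bool

variable [Fintype Λ] [DecidableEq Λ] [Fintype E]

/-- The operator of check α. -/
def checkOp (K : Checks Λ E) (α : E) : Op Λ :=
  (if K.sgn α then (-1 : ℂ) else 1) • pauliOp (K.str α)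

/-- G_α = (1 + C_α)/2. -/
def Gop (K : Checks Λ E) (α : E) : Op Λ := (2⁻¹ : ℂ) • (1 + checkOp K α)

/-- E_α = (1 - C_α)/2. -/
def Eop (K : Checks Λ E) (α : E) : Op Λ := (2⁻¹ : ℂ) • (1 - checkOp K α)

/-- The stabilizer Hamiltonian H₀ = Σ_α E_α. -/
def H0 (K : Checks Λ E) : Op Λ := ∑ α, Eop K α

/-- The stabilizer group 𝒢 generated by the checks (as a submonoid; each check squares to 1). -/
def stab (K : Checks Λ E) : Submonoid (Op Λ) :=
  Submonoid.closure (Set.range (checkOp K))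

/-- All checks pairwise commute (𝒢 abelian). -/
def CommChecks (K : Checks Λ E) : Prop := ∀ α β, Commute (checkOp K α) (checkOp K β)

/-- Check support of a qubit. -/
def suppC (K : Checks Λ E) (x : Λ) : Finset E :=
  Finset.univ.filter fun α => x ∈ psupp (K.str α)

/-- The qubit interaction graph. -/
def qubitGraph (K : Checks Λ E) : SimpleGraph Λ :=
  SimpleGraph.fromRel fun x y => ∃ α, x ∈ psupp (K.str α) ∧ y ∈ psupp (K.str α)

/-- The check interaction graph. -/
def checkGraph (K : Checks Λ E) : SimpleGraph E :=
  SimpleGraph.fromRel fun α β => (psupp (K.str α) ∩ psupp (K.str β)).Nonempty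

/-- `y` lies in the (closed) ball of radius `r` around `x` in the graph `G`. -/
def inBall {V : Type} (G : SimpleGraph V) (x y : V) (r : ℝ) : Prop :=
  G.Reachable x y ∧ (G.dist x y : ℝ) ≤ r

/-- Ball in the qubit graph. -/
def ballQ (K : Checks Λ E) (x : Λ) (r : ℝ) : Finset Λ :=
  Finset.univ.filter fun y => inBall (qubitGraph K) x y r

/-- Ball in the check graph. -/
def ballC (K : Checks Λ E) (α : E) (r : ℝ) : Finset E :=
  Finset.univ.filter fun β => inBall (checkGraph K) α β r

/-- Ball of radius `r` around a set of checks. -/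
def ballCS (K : Checks Λ E) (S : Finset E) (r : ℝ) : Finset E :=
  Finset.univ.filter fun β => ∃ α ∈ S, inBall (checkGraph K) α β r

/-- Growth of balls condition: |B_r| ≤ e^{κ r} on both graphs. -/
def BallGrowth (K : Checks Λ E) (κ : ℝ) : Prop :=
  (∀ (x : Λ) (r : ℝ), ((ballQ K x r).card : ℝ) ≤ Real.exp (κ * r)) ∧
  (∀ (α : E) (r : ℝ), ((ballC K α r).card : ℝ) ≤ Real.exp (κ * r))

/-- A finite set is connected in a graph if the induced subgraph is connected. -/
def ConnIn {V : Type} (G : SimpleGraph V) (S : Finset V) : Prop :=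
  (G.induce (S : Set V)).Connected

/-- Qubit support of a set of checks. -/
def suppSet (K : Checks Λ E) (S : Finset E) : Set Λ :=
  ↑(S.biUnion fun α => psupp (K.str α))

variable [LinearOrder E]

/-- Ordered product of operators over a finite set of check labels. -/
def ordProd (S : Finset E) (f : E → Op Λ) : Op Λ :=
  ((S.sort (· ≤ ·)).map f).prod

/-- The codespace projector P = ∏_α G_α (for commuting checks). -/
def Pmat (K : Checks Λ E) : Op Λ := ordProd Finset.univ (Gop K)

/-- The code distance: minimal support of a Pauli string p with P p P not proportional to P. -/
def codeDist (K : Checks Λ E) : ℕ :=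
  sInf ((fun p => (psupp p).card) ''
    {p : Λ → Fin 4 | ¬∃ cc : ℂ, Pmat K * pauliOp p * Pmat K = cc • Pmat K})

/-- TQO-I: Pauli strings of weight below the code distance commuting with 𝒢 belong to 𝒢. -/
def TQO1 (K : Checks Λ E) : Prop :=
  ∀ p : Λ → Fin 4, (psupp p).card < codeDist K →
    (∀ g ∈ stab K, Commute (pauliOp p) g) → pauliOp p ∈ stab K

/-- TQO-II: group elements locally supported on a small connected check set S are generated by
checks within distance ℓ|S| of S. -/
def TQO2 (K : Checks Λ E) (ℓ dtil : ℝ) : Prop :=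
  ∀ S : Finset E, ConnIn (checkGraph K) S → (S.card : ℝ) < dtil →
    ∀ g ∈ stab K, opSupp (g : Op Λ) ⊆ suppSet K S →
      (g : Op Λ) ∈ Submonoid.closure (checkOp K '' {α | ∃ β ∈ S, inBall (checkGraph K) β α (ℓ * S.card)})

/-! ### Words and operator-collections -/

/-- A word: a quadruple of pairwise disjoint subsets of the checks,
labelled (+, -, excited, ground). -/
structure Word (E : Type) where
  p : Finset E
  m : Finset E
  e : Finset E
  g : Finset E
  hpm : Disjoint p m
  hpe : Disjoint p e
  hpg : Disjoint p g
  hme : Disjoint m e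
  hmg : Disjoint m g
  heg : Disjoint e g

/-- The underlying set of the word. -/
def Word.S [DecidableEq E] (w : Word E) : Finset E := w.p ∪ w.m ∪ w.e ∪ w.g

instance : Fintype (Word E) := by
  classical
  exact Fintype.ofInjective (fun w : Word E => (w.p, w.m, w.e, w.g))
    (by
      rintro ⟨a1, a2, a3, a4, _, _, _, _, _, _⟩ ⟨b1, b2, b3, b4, _, _, _, _, _, _⟩ h
      simp only [Prod.mk.injEq] at h
      obtain ⟨h1, h2, h3, h4⟩ := h
      subst h1; subst h2; subst h3; subst h4; rfl)

/-- A word is a ghost if all components except the ground one are empty. -/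
def IsGhost (w : Word E) : Prop := w.p = ∅ ∧ w.m = ∅ ∧ w.e = ∅

/-- The empty word. -/
def emptyWord (E : Type) : Word E :=
  ⟨∅, ∅, ∅, ∅, by simp, by simp, by simp, by simp, by simp, by simp⟩

/-- Left projector assignment of a word. -/
def leftP (K : Checks Λ E) (w : Word E) (α : E) : Op Λ :=
  if α ∈ w.m ∪ w.g then Gop K α else Eop K α

/-- Right projector assignment of a word. -/
def rightP (K : Checks Λ E) (w : Word E) (α : E) : Op Λ :=
  if α ∈ w.p ∪ w.g then Gop K α else Eop K α

/-- The class 𝒳_𝐒 of operators compatible with the word 𝐒. -/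
def memClass (K : Checks Λ E) (w : Word E) (X : Op Λ) : Prop :=
  ∃ Y : Op Λ,
    (∀ α : E, (opSupp Y ∩ (psupp (K.str α) : Set Λ)).Nonempty → α ∈ w.S) ∧
    X = ordProd w.S (leftP K w) * Y * ordProd w.S (rightP K w)

/-- An operator-collection: a family (O_𝐒)_𝐒 with O_𝐒 ∈ 𝒳_𝐒. -/
def IsColl (K : Checks Λ E) (O : Word E → Op Λ) : Prop :=
  ∀ w, memClass K w (O w)

/-- The intensive word norm ‖O‖_μ of an operator-collection. -/
def wordNorm (μ : ℝ) (O : Word E → Op Λ) : ℝ :=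
  ⨆ α : E, ∑ w : Word E, (if α ∈ w.S then opNorm (O w) * Real.exp (μ * w.S.card) else 0)

/-! ### The multiplication table of words -/

/-- Labels of a check in a word: none, ground, excited, raising, lowering. -/
inductive Lbl | N | G | E | P | M
deriving DecidableEq

/-- The multiplication table of labels; `none` encodes that the product vanishes. -/
def lblMul : Lbl → Lbl → Option Lbl
  | .N, x => some x
  | .G, .N => some .G
  | .G, .G => some .G
  | .G, .E => none
  | .G, .P => none
  | .G, .M => some .M
  | .E, .N => some .E
  | .E, .G => none
  | .E, .E => some .E
  | .E, .P => some .P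
  | .E, .M => none
  | .P, .N => some .P
  | .P, .G => some .P
  | .P, .E => none
  | .P, .P => none
  | .P, .M => some .E
  | .M, .N => some .M
  | .M, .G => none
  | .M, .E => some .M
  | .M, .P => some .G
  | .M, .M => none

/-- The label of a check in a word. -/
def Word.lbl [DecidableEq E] (w : Word E) (α : E) : Lbl :=
  if α ∈ w.p then .P else if α ∈ w.m then .M else if α ∈ w.e then .E
  else if α ∈ w.g then .G else .N

/-- The product of two words is defined (the corresponding operator product does not vanish
identically by the multiplication table). -/
def MulDef (w' w : Word E) : Prop :=
  ∀ α : E, lblMul (w'.lbl α) (w.lbl α) ≠ none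

private lemma disj_aux {f : E → Option Lbl} {a b : Lbl} (hab : a ≠ b) :
    Disjoint (Finset.univ.filter fun α => f α = some a)
      (Finset.univ.filter fun α => f α = some b) := by
  rw [Finset.disjoint_left]
  intro x hx hy
  simp only [Finset.mem_filter] at hx hy
  exact hab (Option.some.inj (hx.2.symm.trans hy.2))

/-- The product word 𝐒'𝐒 (meaningful when `MulDef w' w`). -/
def wmul (w' w : Word E) : Word E where
  p := Finset.univ.filter fun α => lblMul (w'.lbl α) (w.lbl α) = some .P
  m := Finset.univ.filter fun α => lblMul (w'.lbl α) (w.lbl α) = some .M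
  e := Finset.univ.filter fun α => lblMul (w'.lbl α) (w.lbl α) = some .E
  g := Finset.univ.filter fun α => lblMul (w'.lbl α) (w.lbl α) = some .G
  hpm := disj_aux (by decide)
  hpe := disj_aux (by decide)
  hpg := disj_aux (by decide)
  hme := disj_aux (by decide)
  hmg := disj_aux (by decide)
  heg := disj_aux (by decide)

/-- The commutator of two operator-collections. -/
def collComm (O O' : Word E → Op Λ) : Word E → Op Λ := fun w =>
  ∑ w1 : Word E, ∑ w2 : Word E,
    if MulDef w1 w2 ∧ wmul w1 w2 = w ∧ (w1.S ∩ w2.S).Nonempty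
    then O w1 * O' w2 - O' w1 * O w2 else 0

/-- Iterated adjoint action ad_{B_k}⋯ad_{B_1}(B_0) of operator-collections. -/
def chainAd (B : ℕ → Word E → Op Λ) : ℕ → Word E → Op Λ
  | 0 => B 0
  | k + 1 => collComm (B (k + 1)) (chainAd B k)

/-- exp(i ad_A)(B) for operator-collections, defined componentwise. -/
def expAd (A B : Word E → Op Λ) : Word E → Op Λ := fun w =>
  ∑' k : ℕ, ((Complex.I ^ k / (k.factorial : ℂ)) • ((fun C => collComm A C)^[k] B) w)

/-! ### Sequences of words -/

/-- The running products 𝐒'_i of a sequence of words. -/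
def sprime (σ : ℕ → Word E) : ℕ → Word E
  | 0 => σ 0
  | i + 1 => wmul (σ (i + 1)) (sprime σ i)

/-- The running products with ghost words skipped. -/
def sprimeG (σ : ℕ → Word E) : ℕ → Word E
  | 0 => σ 0
  | i + 1 => if IsGhost (σ (i + 1)) then sprimeG σ i else wmul (σ (i + 1)) (sprimeG σ i)

/-- Extend a finite sequence of words by the empty word. -/
def extend {k : ℕ} (σ : Fin (k + 1) → Word E) : ℕ → Word E :=
  fun i => if h : i < k + 1 then σ ⟨i, h⟩ else emptyWord E

/-! ### Pauli norms -/

/-- Size of a minimal connected set of qubits containing the support of `p`. -/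
def mSize (K : Checks Λ E) (p : Λ → Fin 4) : ℕ :=
  sInf {n | ∃ T : Finset Λ, ConnIn (qubitGraph K) T ∧ psupp p ⊆ T ∧ T.card = n}

/-- The intensive Pauli norm of an operator given by Pauli coefficients `c`. -/
def pauliNormC (K : Checks Λ E) (μ : ℝ) (c : (Λ → Fin 4) → ℂ) : ℝ :=
  ⨆ x : Λ, ∑ p : Λ → Fin 4, (if p x ≠ 0 then ‖c p‖ * Real.exp (μ * (mSize K p : ℝ)) else 0)

/-- The intensive Pauli norm of an operator. -/
def pauliNormOp (K : Checks Λ E) (μ : ℝ) (A : Op Λ) : ℝ :=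
  pauliNormC K μ (pauliCoeff A)

/-- Diameter of the qubit graph. -/
def diam (K : Checks Λ E) : ℕ :=
  Finset.univ.sup fun pr : Λ × Λ => (qubitGraph K).dist pr.1 pr.2

/-- The spectral projector of a Hermitian matrix onto the eigenvalues in [-δ, δ]. -/
def spectralProjLE {n : Type} [Fintype n] [DecidableEq n] {A : Matrix n n ℂ}
    (hA : A.IsHermitian) (δ : ℝ) : Matrix n n ℂ :=
  (hA.eigenvectorUnitary : Matrix n n ℂ) *
    Matrix.diagonal (fun i => if |hA.eigenvalues i| ≤ δ then (1 : ℂ) else 0) *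
    star (hA.eigenvectorUnitary : Matrix n n ℂ)



/-! ### Auxiliary lemmas for `D_form_bounded` -/

section FormBoundedAux

lemma pauliMat_conj (i : Fin 4) (a b : Fin 2) :
    (starRingEnd ℂ) (pauliMat i a b) = pauliMat i b a := by
  fin_cases i <;> fin_cases a <;> fin_cases b <;> simp [pauliMat, Matrix.one_apply]

lemma pauliMat_mul_self (i : Fin 4) : pauliMat i * pauliMat i = 1 := by
  fin_cases i <;> ext a b <;> fin_cases a <;> fin_cases b <;>
    simp [pauliMat, Matrix.mul_apply, Fin.sum_univ_two, Matrix.one_apply]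

variable {Λ E : Type} [Fintype Λ] [DecidableEq Λ]

lemma pauliOp_conjTranspose (p : Λ → Fin 4) : (pauliOp p)ᴴ = pauliOp p := by
  ext f g
  simp only [Matrix.conjTranspose_apply, pauliOp, RCLike.star_def, map_prod, pauliMat_conj]

lemma pauliOp_mul_self (p : Λ → Fin 4) : pauliOp p * pauliOp p = 1 := by
  ext f g
  simp only [Matrix.mul_apply, pauliOp, ← Finset.prod_mul_distrib]
  rw [← Fintype.piFinset_univ, ← Finset.prod_univ_sum (fun _ : Λ => (Finset.univ : Finset (Fin 2)))
    (fun x j => pauliMat (p x) (f x) j * pauliMat (p x) j (g x))]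
  have h1 : ∀ x : Λ, ∑ j : Fin 2, pauliMat (p x) (f x) j * pauliMat (p x) j (g x)
      = (1 : Matrix (Fin 2) (Fin 2) ℂ) (f x) (g x) := by
    intro x
    rw [← Matrix.mul_apply, pauliMat_mul_self]
  simp only [h1, Matrix.one_apply]
  by_cases h : f = g
  · subst h; simp
  · rw [if_neg h]
    obtain ⟨x, hx⟩ := Function.ne_iff.mp h
    exact Finset.prod_eq_zero (Finset.mem_univ x) (if_neg hx)

variable [Fintype E]

lemma checkOp_mul_self (K : Checks Λ E) (α : E) : checkOp K α * checkOp K α = 1 := by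
  unfold checkOp
  rw [smul_mul_assoc, mul_smul_comm, smul_smul, pauliOp_mul_self]
  rcases Bool.eq_false_or_eq_true (K.sgn α) with h | h <;> simp [h]

lemma checkOp_conjTranspose (K : Checks Λ E) (α : E) : (checkOp K α)ᴴ = checkOp K α := by
  unfold checkOp
  rw [Matrix.conjTranspose_smul, pauliOp_conjTranspose]
  rcases Bool.eq_false_or_eq_true (K.sgn α) with h | h <;> simp [h]

lemma Eop_conjTranspose (K : Checks Λ E) (α : E) : (Eop K α)ᴴ = Eop K α := by
  unfold Eop
  rw [Matrix.conjTranspose_smul, Matrix.conjTranspose_sub, Matrix.conjTranspose_one,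
    checkOp_conjTranspose]
  norm_num

lemma Eop_idem (K : Checks Λ E) (α : E) : Eop K α * Eop K α = Eop K α := by
  unfold Eop
  rw [smul_mul_assoc, mul_smul_comm, smul_smul]
  have hAA : ((1 : Op Λ) - checkOp K α) * (1 - checkOp K α) = (2 : ℂ) • (1 - checkOp K α) := by
    rw [sub_mul, one_mul, mul_sub, mul_one, checkOp_mul_self]
    module
  rw [hAA, smul_smul]
  norm_num

lemma commute_projs {K : Checks Λ E} (hcomm : CommChecks K) {α β : E}
    {P Q : Op Λ} (hP : P = Eop K α ∨ P = Gop K α) (hQ : Q = Eop K β ∨ Q = Gop K β) :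
    Commute P Q := by
  have h := hcomm α β
  have h1 : Commute (1 : Op Λ) (checkOp K β) := Commute.one_left _
  have h2 : Commute (checkOp K α) (1 : Op Λ) := Commute.one_right _
  have h11 : Commute (1 : Op Λ) (1 : Op Λ) := Commute.one_left _
  rcases hP with rfl | rfl <;> rcases hQ with rfl | rfl <;> simp only [Eop, Gop] <;>
    apply Commute.smul_left <;> apply Commute.smul_right
  · exact (h11.sub_right h1).sub_left (h2.sub_right h)
  · exact (h11.add_right h1).sub_left (h2.add_right h)
  · exact (h11.sub_right h1).add_left (h2.sub_right h)
  · exact (h11.add_right h1).add_left (h2.add_right h)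

lemma list_prod_absorb_left {M : Type*} [Monoid M] {x : M} (hx : x * x = x) :
    ∀ l : List M, x ∈ l → (∀ y ∈ l, Commute x y) → x * l.prod = l.prod := by
  intro l
  induction l with
  | nil => simp
  | cons b t ih =>
    intro hmem hcommL
    rcases List.mem_cons.mp hmem with h | h
    · subst h; rw [List.prod_cons, ← mul_assoc, hx]
    · rw [List.prod_cons, ← mul_assoc, (hcommL b (by simp)).eq, mul_assoc,
        ih h (fun y hy => hcommL y (by simp [hy]))]

lemma list_prod_absorb_right {M : Type*} [Monoid M] {x : M} (hx : x * x = x) (l : List M)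
    (hmem : x ∈ l) (hc : ∀ y ∈ l, Commute x y) : l.prod * x = l.prod := by
  rw [← (Commute.list_prod_right l x hc).eq]
  exact list_prod_absorb_left hx l hmem hc

variable [LinearOrder E]

lemma ordProd_absorb_left {K : Checks Λ E} (hcomm : CommChecks K) (S : Finset E) (f : E → Op Λ)
    (hf : ∀ α ∈ S, f α = Eop K α ∨ f α = Gop K α)
    {a : E} (ha : a ∈ S) (hfa : f a = Eop K a) :
    Eop K a * ordProd S f = ordProd S f := by
  apply list_prod_absorb_left (Eop_idem K a)
  · exact List.mem_map.mpr ⟨a, by simp [Finset.mem_sort, ha], hfa⟩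
  · intro y hy
    obtain ⟨β, hβ, rfl⟩ := List.mem_map.mp hy
    exact commute_projs hcomm (Or.inl rfl) (hf β (by simpa [Finset.mem_sort] using hβ))

lemma ordProd_absorb_right {K : Checks Λ E} (hcomm : CommChecks K) (S : Finset E) (f : E → Op Λ)
    (hf : ∀ α ∈ S, f α = Eop K α ∨ f α = Gop K α)
    {a : E} (ha : a ∈ S) (hfa : f a = Eop K a) :
    ordProd S f * Eop K a = ordProd S f := by
  apply list_prod_absorb_right (Eop_idem K a)
  · exact List.mem_map.mpr ⟨a, by simp [Finset.mem_sort, ha], hfa⟩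
  · intro y hy
    obtain ⟨β, hβ, rfl⟩ := List.mem_map.mp hy
    exact commute_projs hcomm (Or.inl rfl) (hf β (by simpa [Finset.mem_sort] using hβ))

end FormBoundedAux

/-- **Relative form-boundedness of `D` by `H₀`.**
If every nonzero word of the operator-collection `D` satisfies `S_e ∪ S₋ ≠ ∅` and
`S_e ∪ S₊ ≠ ∅`, then for every state `ψ`,
`|⟨ψ, (Σ_𝐒 D_𝐒) ψ⟩| ≤ ‖D‖₀ ⟨ψ, H₀ ψ⟩`. -/
theorem D_form_bounded {Λ E : Type} [Fintype Λ] [DecidableEq Λ] [Fintype E]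
    [LinearOrder E] (K : Checks Λ E) (hcomm : CommChecks K)
    (D : Word E → Op Λ) (hcoll : IsColl K D)
    (hD : ∀ w : Word E, D w ≠ 0 → (w.e ∪ w.m).Nonempty ∧ (w.e ∪ w.p).Nonempty) :
    ∀ ψ : (Λ → Fin 2) → ℂ,
      ‖star ψ ⬝ᵥ (∑ w : Word E, D w).mulVec ψ‖ ≤
        wordNorm 0 D * (star ψ ⬝ᵥ (H0 K).mulVec ψ).re := by
  intro ψ
  classical
  set φ : EuclideanSpace ℂ (Λ → Fin 2) := (WithLp.equiv 2 _).symm ψ with hφ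
  have key : ∀ A : Op Λ, star ψ ⬝ᵥ A.mulVec ψ
      = inner (𝕜 := ℂ) φ (Matrix.toEuclideanCLM (𝕜 := ℂ) A φ) := by
    intro A
    rw [hφ, WithLp.equiv_symm_apply, Matrix.toEuclideanCLM_toLp, EuclideanSpace.inner_toLp_toLp,
      dotProduct_comm]
  have hadj : ∀ α : E, ContinuousLinearMap.adjoint
      (Matrix.toEuclideanCLM (𝕜 := ℂ) (Eop K α)) = Matrix.toEuclideanCLM (𝕜 := ℂ) (Eop K α) := by
    intro α
    rw [← ContinuousLinearMap.star_eq_adjoint, ← map_star, Matrix.star_eq_conjTranspose,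
      Eop_conjTranspose]
  set t : E → ℝ := fun α => (star ψ ⬝ᵥ (Eop K α).mulVec ψ).re with htdef
  have ht : ∀ α : E, t α = ‖Matrix.toEuclideanCLM (𝕜 := ℂ) (Eop K α) φ‖ ^ 2 := by
    intro α
    have h1 : star ψ ⬝ᵥ (Eop K α).mulVec ψ
        = inner (𝕜 := ℂ) (Matrix.toEuclideanCLM (𝕜 := ℂ) (Eop K α) φ)
            (Matrix.toEuclideanCLM (𝕜 := ℂ) (Eop K α) φ) := by
      conv_lhs => rw [key, ← Eop_idem K α]
      rw [_root_.map_mul, ContinuousLinearMap.mul_apply,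
        ← ContinuousLinearMap.adjoint_inner_left, hadj]
    rw [htdef]
    simp only [h1, inner_self_eq_norm_sq_to_K]
    norm_cast
  have htnn : ∀ α : E, 0 ≤ t α := fun α => (ht α) ▸ sq_nonneg _
  have hw : ∀ w : Word E, ‖star ψ ⬝ᵥ (D w).mulVec ψ‖
      ≤ ∑ α ∈ w.S, opNorm (D w) * t α := by
    intro w
    by_cases h0 : D w = 0
    · simp only [h0]
      have hop : opNorm (0 : Op Λ) = 0 := by simp [opNorm]
      simp [hop, Matrix.zero_mulVec]
    · obtain ⟨hem, hep⟩ := hD w h0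
      obtain ⟨a, haa⟩ := hem
      obtain ⟨b, hbb⟩ := hep
      have hanp : a ∉ w.p := by
        rcases Finset.mem_union.mp haa with h | h
        · exact Finset.disjoint_right.mp w.hpe h
        · exact Finset.disjoint_right.mp w.hpm h
      have hang : a ∉ w.g := by
        rcases Finset.mem_union.mp haa with h | h
        · exact Finset.disjoint_left.mp w.heg h
        · exact Finset.disjoint_left.mp w.hmg h
      have hbnm : b ∉ w.m := by
        rcases Finset.mem_union.mp hbb with h | h
        · exact Finset.disjoint_right.mp w.hme h
        · exact Finset.disjoint_left.mp w.hpm h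
      have hbng : b ∉ w.g := by
        rcases Finset.mem_union.mp hbb with h | h
        · exact Finset.disjoint_left.mp w.heg h
        · exact Finset.disjoint_left.mp w.hpg h
      have haS : a ∈ w.S := by
        have := Finset.mem_union.mp haa
        simp only [Word.S, Finset.mem_union]
        tauto
      have hbS : b ∈ w.S := by
        have := Finset.mem_union.mp hbb
        simp only [Word.S, Finset.mem_union]
        tauto
      have hra : rightP K w a = Eop K a := by
        unfold rightP
        rw [if_neg]
        intro h
        rcases Finset.mem_union.mp h with h | h
        exacts [hanp h, hang h]
      have hlb : leftP K w b = Eop K b := by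
        unfold leftP
        rw [if_neg]
        intro h
        rcases Finset.mem_union.mp h with h | h
        exacts [hbnm h, hbng h]
      have hLvals : ∀ α ∈ w.S, leftP K w α = Eop K α ∨ leftP K w α = Gop K α := by
        intro α _
        unfold leftP
        split <;> simp
      have hRvals : ∀ α ∈ w.S, rightP K w α = Eop K α ∨ rightP K w α = Gop K α := by
        intro α _
        unfold rightP
        split <;> simp
      obtain ⟨Y, hYsupp, hDY⟩ := hcoll w
      have habsorbR : D w * Eop K a = D w := by
        conv_lhs => rw [hDY, mul_assoc]
        rw [ordProd_absorb_right hcomm w.S (rightP K w) hRvals haS hra, ← hDY]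
      have habsorbL : Eop K b * D w = D w := by
        conv_lhs => rw [hDY, ← mul_assoc, ← mul_assoc]
        rw [ordProd_absorb_left hcomm w.S (leftP K w) hLvals hbS hlb, ← hDY]
      have hDdecomp : Eop K b * (D w * Eop K a) = D w := by
        rw [habsorbR, habsorbL]
      have hopnn : 0 ≤ opNorm (D w) := norm_nonneg _
      set A := Matrix.toEuclideanCLM (𝕜 := ℂ) (D w) with hA
      set u := Matrix.toEuclideanCLM (𝕜 := ℂ) (Eop K b) φ with hu
      set v := Matrix.toEuclideanCLM (𝕜 := ℂ) (Eop K a) φ with hv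
      have hinner : star ψ ⬝ᵥ (D w).mulVec ψ = inner (𝕜 := ℂ) u (A v) := by
        conv_lhs => rw [← hDdecomp]
        rw [key, _root_.map_mul, _root_.map_mul, ContinuousLinearMap.mul_apply,
          ContinuousLinearMap.mul_apply, ← ContinuousLinearMap.adjoint_inner_left, hadj]
      have hnormA : ‖A‖ = opNorm (D w) := rfl
      calc ‖star ψ ⬝ᵥ (D w).mulVec ψ‖ = ‖inner (𝕜 := ℂ) u (A v)‖ := by
            rw [hinner]
        _ ≤ ‖u‖ * ‖A v‖ := norm_inner_le_norm u (A v)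
        _ ≤ ‖u‖ * (‖A‖ * ‖v‖) := by
            exact mul_le_mul_of_nonneg_left (A.le_opNorm v) (norm_nonneg u)
        _ = opNorm (D w) * (‖u‖ * ‖v‖) := by rw [hnormA]; ring
        _ ≤ opNorm (D w) * ((‖u‖ ^ 2 + ‖v‖ ^ 2) / 2) := by
            have h2 : ‖u‖ * ‖v‖ ≤ (‖u‖ ^ 2 + ‖v‖ ^ 2) / 2 := by nlinarith [sq_nonneg (‖u‖ - ‖v‖)]
            exact mul_le_mul_of_nonneg_left h2 hopnn
        _ = opNorm (D w) * ((t b + t a) / 2) := by rw [ht a, ht b, hu, hv]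
        _ ≤ ∑ α ∈ w.S, opNorm (D w) * t α := by
            rw [← Finset.mul_sum]
            refine mul_le_mul_of_nonneg_left ?_ hopnn
            have h1 : t a ≤ ∑ α ∈ w.S, t α := Finset.single_le_sum (fun i _ => htnn i) haS
            have h2 : t b ≤ ∑ α ∈ w.S, t α := Finset.single_le_sum (fun i _ => htnn i) hbS
            linarith
  have hbound : ∀ α : E, (∑ w : Word E, if α ∈ w.S then opNorm (D w) else 0) ≤ wordNorm 0 D := by
    intro α
    unfold wordNorm
    simp only [zero_mul, Real.exp_zero, mul_one]
    exact le_ciSup (f := fun α : E => ∑ w : Word E, if α ∈ w.S then opNorm (D w) else 0)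
      (Set.Finite.bddAbove (Set.finite_range _)) α
  calc ‖star ψ ⬝ᵥ (∑ w : Word E, D w).mulVec ψ‖
      = ‖∑ w : Word E, star ψ ⬝ᵥ (D w).mulVec ψ‖ := by
        rw [key]
        rw [map_sum, ContinuousLinearMap.sum_apply, inner_sum]
        congr 1
        exact Finset.sum_congr rfl fun w _ => (key (D w)).symm

    _ ≤ ∑ w : Word E, ‖star ψ ⬝ᵥ (D w).mulVec ψ‖ := norm_sum_le _ _
    _ ≤ ∑ w : Word E, ∑ α ∈ w.S, opNorm (D w) * t α := Finset.sum_le_sum fun w _ => hw w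
    _ = ∑ w : Word E, ∑ α : E, (if α ∈ w.S then opNorm (D w) else 0) * t α := by
        refine Finset.sum_congr rfl fun w _ => ?_
        simp [ite_mul, Finset.sum_ite_mem]
    _ = ∑ α : E, (∑ w : Word E, if α ∈ w.S then opNorm (D w) else 0) * t α := by
        rw [Finset.sum_comm]
        exact Finset.sum_congr rfl fun α _ => (Finset.sum_mul _ _ _).symm
    _ ≤ ∑ α : E, wordNorm 0 D * t α :=
        Finset.sum_le_sum fun α _ => mul_le_mul_of_nonneg_right (hbound α) (htnn α)
    _ = wordNorm 0 D * (star ψ ⬝ᵥ (H0 K).mulVec ψ).re := by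
        rw [← Finset.mul_sum]
        congr 1
        rw [key]
        unfold H0
        rw [map_sum, ContinuousLinearMap.sum_apply, inner_sum, Complex.re_sum]
        exact Finset.sum_congr rfl fun α _ => by simp only [htdef, key]


end QLDPC
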